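/- A single step of parallel evolution modulo equivalence decomposes as splits, then one parallel evolution, then flip/join steps: the relations ≈ ∘ ⇒_P ∘ ≈ and S* ∘ ⇒_P ∘ (FJ)* coincide. -/

import Mathlib

open Relation
open scoped NNReal

abbrev PDist (A : Type) := List (ℝ≥0 × A)

namespace PPARS

variable {A X : Type}

/-- Total weight of a list distribution. -/
def weight (D : PDist A) : ℝ≥0 := (D.map Prod.fst).sum

/-- Scale every weight of a distribution by `α`. -/
def scale (α : ℝ≥0) (D : PDist A) : PDist A := D.map (fun pa => (α * pa.1, pa.2))

open Classical in
/-- Total weight that `D` assigns to the element `a`. -/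
noncomputable def wt (D : PDist A) (a : A) : ℝ≥0 :=
  (D.map (fun pa => if pa.2 = a then pa.1 else 0)).sum

/-- The Flip rule, closed under list contexts. -/
inductive FlipS : PDist A → PDist A → Prop
  | mk (E₁ E₂ : PDist A) (p q : ℝ≥0) (a b : A) :
      FlipS (E₁ ++ [(p,a),(q,b)] ++ E₂) (E₁ ++ [(q,b),(p,a)] ++ E₂)

/-- The Join rule, closed under list contexts. -/
inductive JoinS : PDist A → PDist A → Prop
  | mk (E₁ E₂ : PDist A) (p q : ℝ≥0) (a : A) :
      JoinS (E₁ ++ [(p,a),(q,a)] ++ E₂) (E₁ ++ [(p+q,a)] ++ E₂)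

/-- The Split rule, closed under list contexts. -/
inductive SplitS : PDist A → PDist A → Prop
  | mk (E₁ E₂ : PDist A) (p q : ℝ≥0) (a : A) :
      SplitS (E₁ ++ [(p+q,a)] ++ E₂) (E₁ ++ [(p,a),(q,a)] ++ E₂)

/-- One `∼`-step: congruence closure of Flip, Join and Split. -/
def SimStep (D E : PDist A) : Prop := FlipS D E ∨ JoinS D E ∨ SplitS D E

/-- One Flip-or-Join step. -/
def FJ (D E : PDist A) : Prop := FlipS D E ∨ JoinS D E

/-- Distribution equivalence `≈`. -/
def DEquiv : PDist A → PDist A → Prop := ReflTransGen SimStep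

/-- Parallel evolution `⇒_P` for a PARS relation `R`. -/
inductive PEvol (R : A → PDist A → Prop) : PDist A → PDist A → Prop
  | nil : PEvol R [] []
  | keep {ds ds' : PDist A} (p : ℝ≥0) (a : A) :
      PEvol R ds ds' → PEvol R ((p,a) :: ds) ((p,a) :: ds')
  | evolve {a : A} {D ds ds' : PDist A} (p : ℝ≥0) :
      R a D → PEvol R ds ds' → PEvol R ((p,a) :: ds) (scale p D ++ ds')

/-- Proper parallel evolution `⇒_P¹`: at least one element evolves. -/
inductive PEvol1 (R : A → PDist A → Prop) : PDist A → PDist A → Prop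
  | evolve {a : A} {D ds ds' : PDist A} (p : ℝ≥0) :
      R a D → PEvol R ds ds' → PEvol1 R ((p,a) :: ds) (scale p D ++ ds')
  | keep {ds ds' : PDist A} (p : ℝ≥0) (a : A) :
      PEvol1 R ds ds' → PEvol1 R ((p,a) :: ds) ((p,a) :: ds')

/-- The determinisation relation `↠ = ⇒_P ∪ ≈`. -/
def Red (R : A → PDist A → Prop) (D E : PDist A) : Prop := PEvol R D E ∨ DEquiv D E

/-- `R` defines a PARS: successor distributions are normalised. -/
def IsPARS (R : A → PDist A → Prop) : Prop := ∀ a D, R a D → weight D = 1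

/-- A terminal element has no successor distribution. -/
def Terminal (R : A → PDist A → Prop) (a : A) : Prop := ∀ D, ¬ R a D

/-- A terminal distribution contains only terminal elements. -/
def TerminalD (R : A → PDist A → Prop) (D : PDist A) : Prop := ∀ pa ∈ D, Terminal R pa.2

/-- Classical confluence of a relation. -/
def Confluent (r : X → X → Prop) : Prop :=
  ∀ a b c, ReflTransGen r a b → ReflTransGen r a c →
    ∃ d, ReflTransGen r b d ∧ ReflTransGen r c d

/-- Raw (finite) computation trees. -/
inductive CTree (A : Type) where
  | leaf (a : A)
  | node (a : A) (cs : List (ℝ≥0 × CTree A))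

def CTree.root : CTree A → A
  | .leaf a => a
  | .node a _ => a

/-- `IsTree R t a`: `t` is a computation tree of the PARS `R` with root `a`. -/
inductive IsTree (R : A → PDist A → Prop) : CTree A → A → Prop
  | leaf (a : A) : IsTree R (.leaf a) a
  | node (a : A) (cs : List (ℝ≥0 × CTree A)) :
      R a (cs.map fun x => (x.1, x.2.root)) →
      (∀ x ∈ cs, IsTree R x.2 x.2.root) →
      IsTree R (.node a cs) a

mutual
/-- Support of a computation tree. -/
def supp : CTree A → PDist A
  | .leaf a => [(1, a)]
  | .node _ cs => suppL cs
def suppL : List (ℝ≥0 × CTree A) → PDist A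
  | [] => []
  | (p, t) :: ts => scale p (supp t) ++ suppL ts
end

/-- A tree is maximal when all its leaves are terminal elements. -/
inductive MaximalT (R : A → PDist A → Prop) : CTree A → Prop
  | leaf (a : A) : Terminal R a → MaximalT R (.leaf a)
  | node (a : A) (cs : List (ℝ≥0 × CTree A)) :
      (∀ x ∈ cs, MaximalT R x.2) → MaximalT R (.node a cs)

end PPARS


namespace PPARS
variable {A X : Type}

/-- `R` modulo `≈`: an equivalence step, then `r`, then an equivalence step. -/
def ModE (r : PDist A → PDist A → Prop) : PDist A → PDist A → Prop :=
  Relation.Comp DEquiv (Relation.Comp r DEquiv)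

/-- `n`-fold composition of a relation. -/
def npow (r : X → X → Prop) : ℕ → X → X → Prop
  | 0 => Eq
  | n+1 => Relation.Comp r (npow r n)

/-- A local relation on distributions. -/
def LocalRel (r : PDist A → PDist A → Prop) : Prop :=
  ∀ (α β : ℝ≥0) (D₁ D₂ E : PDist A), r (scale α D₁ ++ scale β D₂) E →
    ∃ E₁ E₂, E = scale α E₁ ++ scale β E₂ ∧ r D₁ E₁ ∧ r D₂ E₂

/-- A compositional relation on distributions. -/
def Compositional (r : PDist A → PDist A → Prop) : Prop :=
  ∀ (α β : ℝ≥0) (D₁ E₁ D₂ E₂ : PDist A), r D₁ E₁ → r D₂ E₂ →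
    r (scale α D₁ ++ scale β D₂) (scale α E₁ ++ scale β E₂)

/-- `(γ, δ)` closes `(α, β)` on `D`. -/
def Closes (γ δ α β : PDist A → PDist A → Prop) (D : PDist A) : Prop :=
  ∀ E F, α D E → β D F → ∃ C, γ E C ∧ δ F C

open Classical in
/-- Liveness: total weight assigned to non-terminal elements. -/
noncomputable def liv (R : A → PDist A → Prop) (D : PDist A) : ℝ≥0 :=
  (D.map (fun pa => if Terminal R pa.2 then 0 else pa.1)).sum

/-- L¹ distance between mathematical distributions. -/
noncomputable def fdist (f g : A → ℝ≥0) : ℝ := ∑' a : A, |(f a : ℝ) - (g a : ℝ)|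

/-- L¹ distance between the mathematical distributions induced by two list
distributions. -/
noncomputable def ldist (D E : PDist A) : ℝ := fdist (wt D) (wt E)

end PPARS



namespace PPARS
open Relation

variable {A : Type} {R : A → PDist A → Prop}

@[simp] lemma scale_nil (α : ℝ≥0) : scale α ([] : PDist A) = [] := rfl

@[simp] lemma scale_cons (α p : ℝ≥0) (a : A) (D : PDist A) :
    scale α ((p,a)::D) = (α*p, a) :: scale α D := rfl

@[simp] lemma scale_append (α : ℝ≥0) (D E : PDist A) :
    scale α (D++E) = scale α D ++ scale α E := List.map_append

lemma FlipS.ctx {D E : PDist A} (h : FlipS D E) (L M : PDist A) :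
    FlipS (L++D++M) (L++E++M) := by
  cases h with
  | mk E₁ E₂ p q a b =>
    simpa [List.append_assoc] using FlipS.mk (L++E₁) (E₂++M) p q a b

lemma JoinS.ctx {D E : PDist A} (h : JoinS D E) (L M : PDist A) :
    JoinS (L++D++M) (L++E++M) := by
  cases h with
  | mk E₁ E₂ p q a =>
    simpa [List.append_assoc] using JoinS.mk (L++E₁) (E₂++M) p q a

lemma SplitS.ctx {D E : PDist A} (h : SplitS D E) (L M : PDist A) :
    SplitS (L++D++M) (L++E++M) := by
  cases h with
  | mk E₁ E₂ p q a =>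
    simpa [List.append_assoc] using SplitS.mk (L++E₁) (E₂++M) p q a

lemma FJ.ctx {D E : PDist A} (h : FJ D E) (L M : PDist A) :
    FJ (L++D++M) (L++E++M) :=
  h.elim (fun h => Or.inl (h.ctx L M)) (fun h => Or.inr (h.ctx L M))

lemma fjs_ctx {D E : PDist A} (h : ReflTransGen FJ D E) (L M : PDist A) :
    ReflTransGen FJ (L++D++M) (L++E++M) :=
  ReflTransGen.lift (fun x => L++x++M) (fun _ _ (hh : FJ _ _) => hh.ctx L M) _ _ h

lemma fjs_ctxL {D E : PDist A} (L : PDist A) (h : ReflTransGen FJ D E) :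
    ReflTransGen FJ (L++D) (L++E) := by
  simpa using fjs_ctx h L []

lemma fjs_cons {D E : PDist A} (x : ℝ≥0 × A) (h : ReflTransGen FJ D E) :
    ReflTransGen FJ (x::D) (x::E) := by
  simpa using fjs_ctx h [x] []

lemma ss_cons {D E : PDist A} (x : ℝ≥0 × A) (h : ReflTransGen SplitS D E) :
    ReflTransGen SplitS (x::D) (x::E) := by
  have := ReflTransGen.lift (fun y => [x]++y++([]:PDist A))
    (fun _ _ (hh : SplitS _ _) => hh.ctx [x] []) _ _ h
  simpa using this

/-- Move a single entry to the front by flips. -/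
lemma fj_bubble (L : PDist A) (x : ℝ≥0 × A) (M : PDist A) :
    ReflTransGen FJ (L ++ x :: M) (x :: (L ++ M)) := by
  induction L with
  | nil => exact .refl
  | cons y L ih =>
    refine .tail (fjs_cons y ih) (Or.inl ?_)
    simpa using FlipS.mk [] (L++M) y.1 x.1 y.2 x.2

/-- Swap two adjacent blocks by flips. -/
lemma fj_blockSwap (B₁ B₂ M : PDist A) :
    ReflTransGen FJ (B₁ ++ (B₂ ++ M)) (B₂ ++ (B₁ ++ M)) := by
  induction B₂ generalizing M with
  | nil => exact .refl
  | cons x B₂ ih =>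
    refine .trans ?_ (fjs_cons x (ih M))
    simpa using fj_bubble B₁ x (B₂ ++ M)

/-- Merge two scaled copies of the same distribution, past interleaved junk. -/
lemma fj_merge2 (p q : ℝ≥0) (C X Y : PDist A) :
    ReflTransGen FJ (scale p C ++ (X ++ (scale q C ++ Y)))
      (scale (p+q) C ++ (X ++ Y)) := by
  induction C generalizing X with
  | nil => exact .refl
  | cons rc C ih =>
    obtain ⟨r, c⟩ := rc
    have h1 : ReflTransGen FJ
        ((p*r, c) :: (scale p C ++ (X ++ ((q*r, c) :: (scale q C ++ Y)))))
        ((p*r, c) :: ((q*r, c) :: ((scale p C ++ X) ++ (scale q C ++ Y)))) := by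
      refine fjs_cons _ ?_
      simpa [List.append_assoc] using fj_bubble (scale p C ++ X) (q*r, c) (scale q C ++ Y)
    have h2 : FJ ((p*r, c) :: ((q*r, c) :: ((scale p C ++ X) ++ (scale q C ++ Y))))
        (((p+q)*r, c) :: ((scale p C ++ X) ++ (scale q C ++ Y))) := by
      have := JoinS.mk [] ((scale p C ++ X) ++ (scale q C ++ Y)) (p*r) (q*r) c
      right
      simpa [add_mul] using this
    have h3 : ReflTransGen FJ ((scale p C ++ X) ++ (scale q C ++ Y))
        (scale (p+q) C ++ (X ++ Y)) := by
      simpa [List.append_assoc] using ih X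
    exact (h1.tail h2).trans (fjs_cons _ h3)

/-- Parallel evolution of an append. -/
lemma pevol_append {L M E₁ E₂ : PDist A} (h₁ : PEvol R L E₁) (h₂ : PEvol R M E₂) :
    PEvol R (L++M) (E₁++E₂) := by
  induction h₁ with
  | nil => simpa
  | keep p a h ih => exact .keep p a ih
  | evolve p hr h ih => simpa [List.append_assoc] using PEvol.evolve p hr ih

/-- A one-element block after parallel evolution. -/
def Blk (R : A → PDist A → Prop) (x : ℝ≥0 × A) (B : PDist A) : Prop :=
  B = [x] ∨ ∃ C, R x.2 C ∧ B = scale x.1 C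

lemma pevol_single {x : ℝ≥0 × A} {B : PDist A} (h : Blk R x B) : PEvol R [x] B := by
  obtain ⟨p, a⟩ := x
  rcases h with rfl | ⟨C, hC, rfl⟩
  · exact .keep p a .nil
  · simpa using PEvol.evolve p hC .nil

lemma pevol_cons_inv {x : ℝ≥0 × A} {M E : PDist A} (h : PEvol R (x::M) E) :
    ∃ B cM, Blk R x B ∧ PEvol R M cM ∧ E = B ++ cM := by
  obtain ⟨p, a⟩ := x
  cases h with
  | keep p a h => exact ⟨[(p,a)], _, Or.inl rfl, h, rfl⟩
  | evolve p hr h => exact ⟨_, _, Or.inr ⟨_, hr, rfl⟩, h, rfl⟩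

lemma pevol_append_inv {L M E : PDist A} (h : PEvol R (L++M) E) :
    ∃ E₁ E₂, PEvol R L E₁ ∧ PEvol R M E₂ ∧ E = E₁ ++ E₂ := by
  induction L generalizing E with
  | nil => exact ⟨[], E, .nil, h, rfl⟩
  | cons x L ih =>
    obtain ⟨B, cM, hB, hM, rfl⟩ := pevol_cons_inv h
    obtain ⟨E₁, E₂, hL, hM', rfl⟩ := ih hM
    exact ⟨B ++ E₁, E₂, by
      simpa using pevol_append (pevol_single hB) hL, hM', by simp [List.append_assoc]⟩

/-- Inversion for `SplitS` in cons-normal form. -/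
lemma SplitS.inv {D E : PDist A} (h : SplitS D E) :
    ∃ G₁ G₂ s t z, D = G₁ ++ (s+t,z) :: G₂ ∧ E = G₁ ++ (s,z) :: (t,z) :: G₂ := by
  cases h with
  | mk E₁ E₂ p q a => exact ⟨E₁, E₂, p, q, a, by simp, by simp⟩

lemma FlipS.inv {D E : PDist A} (h : FlipS D E) :
    ∃ G₁ G₂ p q x y, D = G₁ ++ (p,x) :: (q,y) :: G₂ ∧ E = G₁ ++ (q,y) :: (p,x) :: G₂ := by
  cases h with
  | mk E₁ E₂ p q a b => exact ⟨E₁, E₂, p, q, a, b, by simp, by simp⟩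

lemma JoinS.inv {D E : PDist A} (h : JoinS D E) :
    ∃ G₁ G₂ p q x, D = G₁ ++ (p,x) :: (q,x) :: G₂ ∧ E = G₁ ++ (p+q,x) :: G₂ := by
  cases h with
  | mk E₁ E₂ p q a => exact ⟨E₁, E₂, p, q, a, by simp, by simp⟩

/-- Smart constructors in cons-normal form. -/
lemma split_mk' (G₁ G₂ : PDist A) (s t : ℝ≥0) (z : A) :
    SplitS (G₁ ++ (s+t,z) :: G₂) (G₁ ++ (s,z) :: (t,z) :: G₂) := by
  simpa using SplitS.mk G₁ G₂ s t z

lemma flip_mk' (G₁ G₂ : PDist A) (p q : ℝ≥0) (x y : A) :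
    FlipS (G₁ ++ (p,x) :: (q,y) :: G₂) (G₁ ++ (q,y) :: (p,x) :: G₂) := by
  simpa using FlipS.mk G₁ G₂ p q x y

lemma join_mk' (G₁ G₂ : PDist A) (p q : ℝ≥0) (x : A) :
    JoinS (G₁ ++ (p,x) :: (q,x) :: G₂) (G₁ ++ (p+q,x) :: G₂) := by
  simpa using JoinS.mk G₁ G₂ p q x

/-- A flip or join before a parallel evolution can be postponed. -/
lemma fj_pevol {a b c : PDist A} (hfj : FJ a b) (hp : PEvol R b c) :
    ∃ d, PEvol R a d ∧ ReflTransGen FJ d c := by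
  rcases hfj with hf | hj
  · obtain ⟨G₁, G₂, p, q, x, y, rfl, rfl⟩ := hf.inv
    rw [show G₁ ++ (q,y) :: (p,x) :: G₂ = G₁ ++ ((q,y) :: (p,x) :: G₂) from rfl] at hp
    obtain ⟨cL, c₂, hL, h₂, rfl⟩ := pevol_append_inv hp
    obtain ⟨By, c₃, hBy, h₃, rfl⟩ := pevol_cons_inv h₂
    obtain ⟨Bx, cM, hBx, hM, rfl⟩ := pevol_cons_inv h₃
    refine ⟨cL ++ (Bx ++ (By ++ cM)), ?_, ?_⟩
    · exact pevol_append hL (pevol_append (pevol_single hBx)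
        (pevol_append (pevol_single hBy) hM))
    · simpa [List.append_assoc] using fjs_ctxL cL (fj_blockSwap Bx By cM)
  · obtain ⟨G₁, G₂, p, q, x, rfl, rfl⟩ := hj.inv
    obtain ⟨cL, c₂, hL, h₂, rfl⟩ := pevol_append_inv hp
    obtain ⟨B, cM, hB, hM, rfl⟩ := pevol_cons_inv h₂
    rcases hB with rfl | ⟨C, hC, rfl⟩
    · refine ⟨cL ++ ((p,x) :: (q,x) :: cM), ?_, ?_⟩
      · exact pevol_append hL (.keep p x (.keep q x hM))
      · exact .single (Or.inr (by simpa using JoinS.mk cL cM p q x))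
    · refine ⟨cL ++ (scale p C ++ (scale q C ++ cM)), ?_, ?_⟩
      · refine pevol_append hL ?_
        have h1 : PEvol R ((q,x) :: G₂) (scale q C ++ cM) := PEvol.evolve q hC hM
        exact PEvol.evolve p hC h1
      · simpa using fjs_ctxL cL (fj_merge2 p q C [] cM)

/-- Many flips/joins before a parallel evolution can be postponed. -/
lemma fjs_pevol {a b c : PDist A} (hfj : ReflTransGen FJ a b) (hp : PEvol R b c) :
    ∃ d, PEvol R a d ∧ ReflTransGen FJ d c := by
  induction hfj using ReflTransGen.head_induction_on with
  | refl => exact ⟨c, hp, .refl⟩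
  | head h _ ih =>
    obtain ⟨d₁, hp₁, hd₁⟩ := ih
    obtain ⟨d, hpd, hdd⟩ := fj_pevol h hp₁
    exact ⟨d, hpd, hdd.trans hd₁⟩

/-- Position trichotomy for a middle element. -/
lemma cons_mid {α : Type*} {E₁ E₂ G₁ G₂ : List α} {u w : α}
    (h : E₁ ++ u :: E₂ = G₁ ++ w :: G₂) :
    (G₁ = E₁ ∧ w = u ∧ G₂ = E₂) ∨
    (∃ k, G₁ = E₁ ++ u :: k ∧ E₂ = k ++ w :: G₂) ∨
    (∃ k, E₁ = G₁ ++ w :: k ∧ G₂ = k ++ u :: E₂) := by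
  rcases List.append_eq_append_iff.mp h with ⟨k, h1, h2⟩ | ⟨k, h1, h2⟩
  · cases k with
    | nil =>
      obtain ⟨h3, h4⟩ := List.cons_eq_cons.mp h2
      exact Or.inl ⟨by simpa using h1, h3.symm, h4.symm⟩
    | cons w' k' =>
      obtain ⟨h3, h4⟩ := List.cons_eq_cons.mp h2
      exact Or.inr (Or.inl ⟨k', by rw [h1, h3], h4⟩)
  · cases k with
    | nil =>
      obtain ⟨h3, h4⟩ := List.cons_eq_cons.mp h2
      exact Or.inl ⟨by simpa using h1.symm, h3, h4⟩
    | cons w' k' =>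
      obtain ⟨h3, h4⟩ := List.cons_eq_cons.mp h2
      exact Or.inr (Or.inr ⟨k', by rw [h1, ← h3], h4⟩)

/-- Position analysis for a middle element against two adjacent elements. -/
lemma cons_mid₂ {α : Type*} {E₁ E₂ G₁ G₂ : List α} {u v w : α}
    (h : E₁ ++ u :: v :: E₂ = G₁ ++ w :: G₂) :
    (G₁ = E₁ ∧ w = u ∧ G₂ = v :: E₂) ∨
    (G₁ = E₁ ++ [u] ∧ w = v ∧ G₂ = E₂) ∨
    (∃ k, G₁ = E₁ ++ u :: v :: k ∧ E₂ = k ++ w :: G₂) ∨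
    (∃ k, E₁ = G₁ ++ w :: k ∧ G₂ = k ++ u :: v :: E₂) := by
  rcases cons_mid h with ⟨h1, h2, h3⟩ | ⟨k, h1, h2⟩ | ⟨k, h1, h2⟩
  · exact Or.inl ⟨h1, h2, h3⟩
  · cases k with
    | nil =>
      obtain ⟨h3, h4⟩ := List.cons_eq_cons.mp h2
      exact Or.inr (Or.inl ⟨by simpa using h1, h3.symm, h4.symm⟩)
    | cons v' k' =>
      obtain ⟨h3, h4⟩ := List.cons_eq_cons.mp h2
      exact Or.inr (Or.inr (Or.inl ⟨k', by rw [h1, ← h3], h4⟩))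
  · exact Or.inr (Or.inr (Or.inr ⟨k, h1, h2⟩))

/-- A flip or join before a split can be postponed. -/
lemma fj_split {a b c : PDist A} (hfj : FJ a b) (hs : SplitS b c) :
    ∃ d, SplitS a d ∧ ReflTransGen FJ d c := by
  obtain ⟨G₁, G₂, s, t, z, hb, rfl⟩ := hs.inv
  rcases hfj with hf | hj
  · obtain ⟨E₁, E₂, p, q, x, y, rfl, hb'⟩ := hf.inv
    subst hb'
    rcases cons_mid₂ hb with ⟨h1, h2, h3⟩ | ⟨h1, h2, h3⟩ | ⟨k, h1, h2⟩ | ⟨k, h1, h2⟩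
    · injection h2 with hst hz
      rw [h1, h3, hz, ← hst]
      refine ⟨E₁ ++ (p,x) :: (s,y) :: (t,y) :: E₂, ?_, ?_⟩
      · simpa using split_mk' (E₁ ++ [(p,x)]) E₂ s t y
      · refine ReflTransGen.head (Or.inl (flip_mk' E₁ ((t,y)::E₂) p s x y)) ?_
        exact .single (Or.inl (by simpa using flip_mk' (E₁ ++ [(s,y)]) E₂ p t x y))
    · injection h2 with hst hz
      rw [h1, h3, hz, ← hst]
      refine ⟨E₁ ++ (s,x) :: (t,x) :: (q,y) :: E₂, ?_, ?_⟩
      · exact split_mk' E₁ ((q,y)::E₂) s t x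
      · have h5 : FlipS (E₁ ++ (s,x) :: (t,x) :: (q,y) :: E₂)
            (E₁ ++ (s,x) :: (q,y) :: (t,x) :: E₂) := by
          simpa using flip_mk' (E₁ ++ [(s,x)]) E₂ t q x y
        refine ReflTransGen.head (Or.inl h5) ?_
        refine .single (Or.inl ?_)
        simpa using flip_mk' E₁ ((t,x)::E₂) s q x y
    · rw [h1, h2]
      refine ⟨E₁ ++ (p,x) :: (q,y) :: (k ++ (s,z) :: (t,z) :: G₂), ?_, ?_⟩
      · simpa using split_mk' (E₁ ++ (p,x) :: (q,y) :: k) G₂ s t z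
      · refine .single (Or.inl ?_)
        simpa using flip_mk' E₁ (k ++ (s,z) :: (t,z) :: G₂) p q x y
    · rw [h1, h2]
      refine ⟨G₁ ++ (s,z) :: (t,z) :: (k ++ (p,x) :: (q,y) :: E₂), ?_, ?_⟩
      · simpa using split_mk' G₁ (k ++ (p,x) :: (q,y) :: E₂) s t z
      · refine .single (Or.inl ?_)
        simpa using flip_mk' (G₁ ++ (s,z) :: (t,z) :: k) E₂ p q x y
  · obtain ⟨E₁, E₂, p, q, x, rfl, hb'⟩ := hj.inv
    subst hb'
    rcases cons_mid hb with ⟨h1, h2, h3⟩ | ⟨k, h1, h2⟩ | ⟨k, h1, h2⟩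
    · injection h2 with hst hz
      rw [h1, h3, hz]
      have hpq : p + q = s + t := hst.symm
      by_cases hsp : s ≤ p
      · obtain ⟨r, hr⟩ : ∃ r, p = s + r := ⟨p - s, (add_tsub_cancel_of_le hsp).symm⟩
        have ht : r + q = t := by
          have h4 : s + (r + q) = s + t := by rw [← add_assoc, ← hr, hpq]
          exact add_left_cancel h4
        subst hr
        refine ⟨E₁ ++ (s,x) :: (r,x) :: (q,x) :: E₂, ?_, ?_⟩
        · exact split_mk' E₁ ((q,x)::E₂) s r x
        · refine .single (Or.inr ?_)
          have h5 := join_mk' (E₁ ++ [(s,x)]) E₂ r q x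
          rw [ht] at h5
          simpa using h5
      · push_neg at hsp
        have hqt : t ≤ q := by
          by_contra h4
          push_neg at h4
          exact absurd hpq (ne_of_gt (add_lt_add hsp h4)).symm
        obtain ⟨r, hr⟩ : ∃ r, q = r + t := ⟨q - t, (tsub_add_cancel_of_le hqt).symm⟩
        have hst' : p + r = s := by
          have h4 : (p + r) + t = s + t := by rw [add_assoc, ← hr, hpq]
          exact add_right_cancel h4
        subst hr
        refine ⟨E₁ ++ (p,x) :: (r,x) :: (t,x) :: E₂, ?_, ?_⟩
        · simpa using split_mk' (E₁ ++ [(p,x)]) E₂ r t x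
        · refine .single (Or.inr ?_)
          have h5 := join_mk' E₁ ((t,x)::E₂) p r x
          rw [hst'] at h5
          exact h5
    · rw [h1, h2]
      refine ⟨E₁ ++ (p,x) :: (q,x) :: (k ++ (s,z) :: (t,z) :: G₂), ?_, ?_⟩
      · simpa using split_mk' (E₁ ++ (p,x) :: (q,x) :: k) G₂ s t z
      · refine .single (Or.inr ?_)
        simpa using join_mk' E₁ (k ++ (s,z) :: (t,z) :: G₂) p q x
    · rw [h1, h2]
      refine ⟨G₁ ++ (s,z) :: (t,z) :: (k ++ (p,x) :: (q,x) :: E₂), ?_, ?_⟩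
      · simpa using split_mk' G₁ (k ++ (p,x) :: (q,x) :: E₂) s t z
      · refine .single (Or.inr ?_)
        simpa using join_mk' (G₁ ++ (s,z) :: (t,z) :: k) E₂ p q x

/-- Decompose a scaled list along an append. -/
lemma scale_eq_append {α : ℝ≥0} {C L₁ L₂ : PDist A} (h : scale α C = L₁ ++ L₂) :
    ∃ K₁ K₂, C = K₁ ++ K₂ ∧ scale α K₁ = L₁ ∧ scale α K₂ = L₂ := by
  induction C generalizing L₁ with
  | nil =>
    obtain ⟨h1, h2⟩ := List.append_eq_nil_iff.mp h.symm
    exact ⟨[], [], rfl, by simp [h1], by simp [h2]⟩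
  | cons x C ih =>
    cases L₁ with
    | nil => exact ⟨[], x :: C, rfl, rfl, by simpa using h⟩
    | cons y L₁ =>
      obtain ⟨x, a⟩ := x
      rw [scale_cons] at h
      obtain ⟨h1, h2⟩ := List.cons_eq_cons.mp h
      obtain ⟨K₁, K₂, rfl, hK₁, hK₂⟩ := ih h2
      exact ⟨(x,a) :: K₁, K₂, rfl, by rw [scale_cons, hK₁, h1], hK₂⟩

lemma scale_eq_cons {α : ℝ≥0} {C L : PDist A} {y : ℝ≥0 × A}
    (h : scale α C = y :: L) :
    ∃ r z K, C = (r,z) :: K ∧ y = (α * r, z) ∧ scale α K = L := by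
  cases C with
  | nil => simp [scale] at h
  | cons x C =>
    obtain ⟨r, z⟩ := x
    rw [scale_cons] at h
    obtain ⟨h1, h2⟩ := List.cons_eq_cons.mp h
    exact ⟨r, z, C, rfl, h1.symm, h2⟩

/-- A split after a parallel evolution can be pulled back before it. -/
lemma pevol_split {D E : PDist A} (hp : PEvol R D E) :
    ∀ {E'}, SplitS E E' →
      ∃ D₁ E₁, ReflTransGen SplitS D D₁ ∧ PEvol R D₁ E₁ ∧ ReflTransGen FJ E₁ E' := by
  induction hp with
  | nil =>
    intro E' hs
    obtain ⟨G₁, G₂, s, t, z, hb, rfl⟩ := hs.inv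
    exact absurd hb.symm (by simp)
  | @keep ds ds' p a hp ih =>
    intro E' hs
    obtain ⟨G₁, G₂, s, t, z, hb, rfl⟩ := hs.inv
    cases G₁ with
    | nil =>
      simp only [List.nil_append] at hb ⊢
      obtain ⟨h1, h2⟩ := List.cons_eq_cons.mp hb
      injection h1 with hst hz
      rw [← h2, hz, hst]
      refine ⟨(s,z) :: (t,z) :: ds, (s,z) :: (t,z) :: ds', ?_, ?_, .refl⟩
      · exact .single (by simpa using split_mk' [] ds s t z)
      · exact .keep s z (.keep t z hp)
    | cons w G₁ =>
      obtain ⟨h1, h2⟩ := List.cons_eq_cons.mp hb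
      obtain ⟨d₁, e₁, hS, hP, hFJ⟩ := ih (show SplitS ds' (G₁ ++ (s,z) :: (t,z) :: G₂) by
        rw [h2]; exact split_mk' G₁ G₂ s t z)
      rw [← h1]
      exact ⟨(p,a) :: d₁, (p,a) :: e₁, ss_cons _ hS, .keep p a hP, fjs_cons _ hFJ⟩
  | @evolve a C ds ds' p hC hp ih =>
    intro E' hs
    obtain ⟨G₁, G₂, s, t, z, hb, rfl⟩ := hs.inv
    rcases List.append_eq_append_iff.mp hb with ⟨k, hG₁, hk⟩ | ⟨k, hk, hG₂⟩
    · -- the split falls inside `ds'`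
      obtain ⟨d₁, e₁, hS, hP, hFJ⟩ := ih (show SplitS ds' (k ++ (s,z) :: (t,z) :: G₂) by
        rw [hk]; exact split_mk' k G₂ s t z)
      rw [hG₁]
      refine ⟨(p,a) :: d₁, scale p C ++ e₁, ss_cons _ hS, .evolve p hC hP, ?_⟩
      simpa [List.append_assoc] using fjs_ctxL (scale p C) hFJ
    · cases k with
      | nil =>
        simp only [List.nil_append] at hG₂
        simp only [List.append_nil] at hk
        obtain ⟨d₁, e₁, hS, hP, hFJ⟩ := ih (show SplitS ds' ((s,z) :: (t,z) :: G₂) by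
          rw [← hG₂]; simpa using split_mk' [] G₂ s t z)
        rw [← hk]
        exact ⟨(p,a) :: d₁, scale p C ++ e₁, ss_cons _ hS, .evolve p hC hP,
          fjs_ctxL (scale p C) hFJ⟩
      | cons w k' =>
        obtain ⟨h1, h2⟩ := List.cons_eq_cons.mp hG₂
        rw [← h1] at hk
        -- the split falls inside the block `scale p C`
        obtain ⟨K₁, K₂, rfl, hK₁, hK₂⟩ := scale_eq_append hk
        obtain ⟨r, zc, K₂', rfl, hw, hK₂'⟩ := scale_eq_cons hK₂
        injection hw with hst hz
        obtain ⟨p₁, p₂, hp12, h1r, h2r⟩ : ∃ p₁ p₂, p₁ + p₂ = p ∧ p₁ * r = s ∧ p₂ * r = t := by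
          by_cases hr : r = 0
          · obtain ⟨hs0, ht0⟩ := add_eq_zero.mp (by rw [hst, hr, mul_zero])
            exact ⟨p, 0, add_zero p, by rw [hr, mul_zero, hs0], by rw [zero_mul, ht0]⟩
          · refine ⟨s / r, t / r, ?_, div_mul_cancel₀ s hr, div_mul_cancel₀ t hr⟩
            rw [← add_div, hst, mul_div_assoc, div_self hr, mul_one]
        refine ⟨(p₁,a) :: (p₂,a) :: ds,
          scale p₁ (K₁ ++ (r,zc) :: K₂') ++ (scale p₂ (K₁ ++ (r,zc) :: K₂') ++ ds'),
          ?_, .evolve p₁ hC (.evolve p₂ hC hp), ?_⟩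
        · refine .single ?_
          rw [show p = p₁ + p₂ from hp12.symm]
          simpa using split_mk' [] ds p₁ p₂ a
        · -- flips and joins from the doubled block to the split block
          have step1 : ReflTransGen FJ
              (scale p₁ K₁ ++ (((p₁*r,zc) :: scale p₁ K₂') ++
                (scale p₂ K₁ ++ ((p₂*r,zc) :: (scale p₂ K₂' ++ ds')))))
              (scale (p₁+p₂) K₁ ++ (((p₁*r,zc) :: scale p₁ K₂') ++
                ((p₂*r,zc) :: (scale p₂ K₂' ++ ds')))) :=
            fj_merge2 p₁ p₂ K₁ ((p₁*r,zc) :: scale p₁ K₂') ((p₂*r,zc) :: (scale p₂ K₂' ++ ds'))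
          have step2 : ReflTransGen FJ
              (scale (p₁+p₂) K₁ ++ ((p₁*r,zc) :: (scale p₁ K₂' ++
                ((p₂*r,zc) :: (scale p₂ K₂' ++ ds')))))
              (scale (p₁+p₂) K₁ ++ ((p₁*r,zc) :: ((p₂*r,zc) ::
                (scale p₁ K₂' ++ (scale p₂ K₂' ++ ds'))))) := by
            refine fjs_ctxL (scale (p₁+p₂) K₁) (fjs_cons _ ?_)
            exact fj_bubble (scale p₁ K₂') (p₂*r,zc) (scale p₂ K₂' ++ ds')
          have step3 : ReflTransGen FJ
              (scale (p₁+p₂) K₁ ++ ((p₁*r,zc) :: ((p₂*r,zc) ::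
                (scale p₁ K₂' ++ (scale p₂ K₂' ++ ds')))))
              (scale (p₁+p₂) K₁ ++ ((p₁*r,zc) :: ((p₂*r,zc) ::
                (scale (p₁+p₂) K₂' ++ ds')))) := by
            refine fjs_ctxL (scale (p₁+p₂) K₁) (fjs_cons _ (fjs_cons _ ?_))
            simpa using fj_merge2 p₁ p₂ K₂' [] ds'
          have chain := (step1.trans ((by simpa [List.append_assoc] using step2 :
            ReflTransGen FJ _ _))).trans step3
          have hsrc : scale p₁ (K₁ ++ (r,zc) :: K₂') ++ (scale p₂ (K₁ ++ (r,zc) :: K₂') ++ ds')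
              = (scale p₁ K₁ ++ (((p₁*r,zc) :: scale p₁ K₂') ++
                (scale p₂ K₁ ++ ((p₂*r,zc) :: (scale p₂ K₂' ++ ds'))))) := by
            simp [List.append_assoc]
          have htgt : (scale (p₁+p₂) K₁ ++ ((p₁*r,zc) :: ((p₂*r,zc) ::
              (scale (p₁+p₂) K₂' ++ ds')))) = G₁ ++ (s,z) :: (t,z) :: G₂ := by
            rw [hp12, h1r, h2r, hK₁, ← hz, h2, hK₂']
            simp [List.append_assoc]
          rw [hsrc, ← htgt]
          exact chain

/-- Many flips/joins before a split can be postponed. -/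
lemma fjs_split {a b c : PDist A} (hfj : ReflTransGen FJ a b) (hs : SplitS b c) :
    ∃ d, SplitS a d ∧ ReflTransGen FJ d c := by
  induction hfj using ReflTransGen.head_induction_on with
  | refl => exact ⟨c, hs, .refl⟩
  | head h _ ih =>
    obtain ⟨d₁, hs₁, hd₁⟩ := ih
    obtain ⟨d, hsd, hdd⟩ := fj_split h hs₁
    exact ⟨d, hsd, hdd.trans hd₁⟩

/-- Many flips/joins before many splits can be postponed. -/
lemma fjs_splitsAux {a b c : PDist A} (hfj : ReflTransGen FJ a b)
    (hs : ReflTransGen SplitS b c) :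
    ∃ d, ReflTransGen SplitS a d ∧ ReflTransGen FJ d c := by
  induction hs using ReflTransGen.head_induction_on generalizing a with
  | refl => exact ⟨a, .refl, hfj⟩
  | head hstep _ ih =>
    obtain ⟨d₁, hsd₁, hd₁⟩ := fjs_split hfj hstep
    obtain ⟨d, hsd, hdd⟩ := ih hd₁
    exact ⟨d, hsd.head hsd₁, hdd⟩

/-- The target relation: splits, then one parallel evolution, then flips/joins. -/
private def T (R : A → PDist A → Prop) (a c : PDist A) : Prop :=
  ∃ m n, ReflTransGen SplitS a m ∧ PEvol R m n ∧ ReflTransGen FJ n c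

lemma T_left {a b c : PDist A} (h : SimStep a b) (hT : T R b c) : T R a c := by
  obtain ⟨m, n, hS, hP, hFJ⟩ := hT
  rcases h with hf | hj | hsp
  · -- a flip before: push it through the splits, then through the evolution
    obtain ⟨d, hsd, hdd⟩ := fjs_splitsAux (.single (Or.inl hf)) hS
    obtain ⟨e, hpe, hee⟩ := fjs_pevol hdd hP
    exact ⟨d, e, hsd, hpe, hee.trans hFJ⟩
  · obtain ⟨d, hsd, hdd⟩ := fjs_splitsAux (.single (Or.inr hj)) hS
    obtain ⟨e, hpe, hee⟩ := fjs_pevol hdd hP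
    exact ⟨d, e, hsd, hpe, hee.trans hFJ⟩
  · exact ⟨m, n, hS.head hsp, hP, hFJ⟩

lemma T_right {a b c : PDist A} (hT : T R a b) (h : SimStep b c) : T R a c := by
  obtain ⟨m, n, hS, hP, hFJ⟩ := hT
  rcases h with hf | hj | hsp
  · exact ⟨m, n, hS, hP, hFJ.tail (Or.inl hf)⟩
  · exact ⟨m, n, hS, hP, hFJ.tail (Or.inr hj)⟩
  · obtain ⟨d, hsd, hdd⟩ := fjs_split hFJ hsp
    obtain ⟨m₁, e₁, hS₁, hP₁, hFJ₁⟩ := pevol_split hP hsd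
    exact ⟨m₁, e₁, hS.trans hS₁, hP₁, hFJ₁.trans hdd⟩

lemma T_dequiv_left {a b c : PDist A} (h : DEquiv a b) (hT : T R b c) : T R a c := by
  induction h using ReflTransGen.head_induction_on with
  | refl => exact hT
  | head hstep _ ih => exact T_left hstep ih

lemma T_dequiv_right {a b c : PDist A} (hT : T R a b) (h : DEquiv b c) : T R a c := by
  induction h with
  | refl => exact hT
  | tail _ hstep ih => exact T_right ih hstep

lemma splits_dequiv {a b : PDist A} (h : ReflTransGen SplitS a b) : DEquiv a b :=
  ReflTransGen.mono (fun _ _ (hh : SplitS _ _) => Or.inr (Or.inr hh)) _ _ h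

lemma fjs_dequiv {a b : PDist A} (h : ReflTransGen FJ a b) : DEquiv a b :=
  ReflTransGen.mono (fun _ _ (hh : FJ _ _) => hh.elim Or.inl (fun j => Or.inr (Or.inl j))) _ _ h

end PPARS

open PPARS Relation in
/-- One step of `⇒_P` modulo `≈` decomposes as splits, one parallel evolution, then
flips and joins: `≈ ∘ ⇒_P ∘ ≈  =  S* ∘ ⇒_P ∘ (FJ)*`. -/
theorem decomp_one {A : Type} (R : A → PDist A → Prop) (hR : IsPARS R) :
    ∀ D E : PDist A, ModE (PEvol R) D E ↔
      Relation.Comp (ReflTransGen SplitS)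
        (Relation.Comp (PEvol R) (ReflTransGen FJ)) D E := by
  intro D E
  constructor
  · rintro ⟨m, hDm, n, hP, hnE⟩
    have hT : T R m n := ⟨m, n, .refl, hP, .refl⟩
    obtain ⟨m', n', hS, hP', hFJ⟩ := T_dequiv_left hDm (T_dequiv_right hT hnE)
    exact ⟨m', hS, n', hP', hFJ⟩
  · rintro ⟨m, hS, n, hP, hFJ⟩
    exact ⟨m, splits_dequiv hS, n, hP, fjs_dequiv hFJ⟩
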